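/- Let n ≥ 2, let S_n be the symmetric group with standard Coxeter generators S = {s_1, …, s_{n−1}}, and let k ∈ ℕ. Then for all u, v ∈ S_n: u ≤ v in the Bruhat order if and only if P^{S∖{s_i}}(u) ≤_{L^k} P^{S∖{s_i}}(v) for every i ∈ {1, …, n−1}. Consequently the induced subposet Im(φ_k) of the product of the posets (S_n^{S∖{s_i}}, ≤_{L^k}), where φ_k(w) = (P^{S∖{s_1}}(w), …, P^{S∖{s_{n−1}}}(w)), is isomorphic to (S_n, ≤). -/

import Mathlib

/-!
Formalization of definitions from "orders on Coxeter groups associated with sets of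
reflections" (k-intermediate orders, k-Bruhat graphs, k-absolute orders).

All definitions are parametrized by a length function `len : W → ℕ` and a set of
"reflections"; they are instantiated either with a `CoxeterSystem` (`cs.length` and
`cs.IsReflection`) or concretely with the symmetric group `Equiv.Perm (Fin n)`
(inversion number and transpositions).
-/

namespace KBruhatPaper

variable {W : Type*} [Group W]

/-- One step in the directed graph associated with `len` and the set `X ⊆ T`:
`v` is obtained from `u` by multiplying on the left by an element `t ∈ X`,
with `len u < len v`. -/
def Step (len : W → ℕ) (X : Set W) (u v : W) : Prop :=
  ∃ t ∈ X, v = t * u ∧ len u < len v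

/-- The partial order `≤_{L^X}`: `u ≤_{L^X} v` iff `u = v` or there are
`t₁, …, t_r ∈ X` with `len u < len (t₁ u) < ⋯ < len (t_r ⋯ t₁ u)` and
`t_r ⋯ t₁ u = v`.  For `X = T` (all reflections) this is the Bruhat order. -/
def leL (len : W → ℕ) (X : Set W) : W → W → Prop :=
  Relation.ReflTransGen (Step len X)

/-- The strict order `<_{L^X}`. -/
def ltL (len : W → ℕ) (X : Set W) (u v : W) : Prop :=
  leL len X u v ∧ u ≠ v

/-- The covering relation of the poset `(W, ≤_{L^X})`. -/
def CovL (len : W → ℕ) (X : Set W) (u v : W) : Prop :=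
  ltL len X u v ∧ ¬∃ w, ltL len X u w ∧ ltL len X w v

/-- `N(v) = {t ∈ T : len (t * v) < len v}`. -/
def NSet (len : W → ℕ) (T : Set W) (v : W) : Set W :=
  {t ∈ T | len (t * v) < len v}

/-- A reflection subgroup: a subgroup generated by a subset of `T`. -/
def IsReflSubgroup (T : Set W) (W' : Subgroup W) : Prop :=
  ∃ A ⊆ T, W' = Subgroup.closure A

/-- The canonical Coxeter generators `S' = {t ∈ T : N(t) ∩ W' = {t}}` of a
reflection subgroup `W'`. -/
def CanGens (len : W → ℕ) (T : Set W) (W' : Subgroup W) : Set W :=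
  {t ∈ T | NSet len T t ∩ (W' : Set W) = {t}}

/-- The relation `⊑'` on `T`: `t ⊑' t'` iff `t = t'` or there is a dihedral
reflection subgroup `W'` (i.e. with exactly two canonical generators) containing
`t` and `t'`, together with a directed path from `t` to `t'` in the Bruhat graph
restricted to `W'`. -/
def SqLe' (len : W → ℕ) (T : Set W) (t t' : W) : Prop :=
  t = t' ∨ ∃ W' : Subgroup W, IsReflSubgroup T W' ∧ t ∈ W' ∧ t' ∈ W' ∧
    (CanGens len T W').encard = 2 ∧
    ∃ (n : ℕ) (x : ℕ → W), x 0 = t ∧ x n = t' ∧ (∀ i ≤ n, x i ∈ W') ∧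
      ∀ i < n, x i * (x (i + 1))⁻¹ ∈ T ∧ ltL len T (x i) (x (i + 1))

/-- The relation `⊑` on `T`: the transitive closure of `⊑'`. -/
def SqLe (len : W → ℕ) (T : Set W) : W → W → Prop :=
  Relation.TransGen (SqLe' len T)

/-- `X ⊆ T` is an order ideal of `(T, ⊑)`. -/
def IsIdeal (len : W → ℕ) (T : Set W) (X : Set W) : Prop :=
  X ⊆ T ∧ ∀ t t', SqLe len T t t' → t' ∈ X → t ∈ X

/-- `PFactor len J w wup wJ` expresses that `w = w^J ⬝ w_J` is the (unique) parabolic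
factorization of `w` with respect to the set `J` of simple reflections:
`wup = w^J = P^J(w)` and `wJ = w_J ∈ W_J`. -/
def PFactor (len : W → ℕ) (J : Set W) (w wup wJ : W) : Prop :=
  wJ ∈ Subgroup.closure J ∧ (∀ s ∈ J, len wup < len (wup * s)) ∧
    w = wup * wJ ∧ len w = len wup + len wJ

/-- `QFactor len J w wJ wq` expresses that `w = w'_J ⬝ (ᴶw)` is the (unique) parabolic
factorization of `w` with respect to the set `J` of simple reflections:
`wJ = w'_J ∈ W_J` and `wq = ᴶw = Q^J(w)`. -/
def QFactor (len : W → ℕ) (J : Set W) (w wJ wq : W) : Prop :=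
  wJ ∈ Subgroup.closure J ∧ (∀ s ∈ J, len wq < len (s * wq)) ∧
    w = wJ * wq ∧ len w = len wJ + len wq

/-- A chain `e = x₀ → x₁ → ⋯ → x_r = w` of `r` steps in the directed graph with
steps from `X` (for `X = T_k`, a path from `e` to `w` in the `k`-Bruhat graph). -/
def ChainOfLen (len : W → ℕ) (X : Set W) (w : W) (r : ℕ) : Prop :=
  ∃ x : ℕ → W, x 0 = 1 ∧ x r = w ∧ ∀ i < r, Step len X (x i) (x (i + 1))

/-- `HasAbsLen len X w r` : `r` is the `X`-absolute length of `w`, i.e. the least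
number of steps from `X` needed to reach `w` from the identity (for `X = T_k`,
the distance from `e` to `w` in the `k`-Bruhat graph, `ℓ_k(w)`). -/
def HasAbsLen (len : W → ℕ) (X : Set W) (w : W) (r : ℕ) : Prop :=
  IsLeast {r | ChainOfLen len X w r} r

section CoxeterSystem

variable {B : Type*} {M : CoxeterMatrix B}

/-- The set `T` of reflections of a Coxeter system. -/
def TSet (cs : CoxeterSystem M W) : Set W := {t | cs.IsReflection t}

/-- The set `T_k = {t ∈ T : ℓ(t) ≤ 2k + 1}`. -/
def TkSet (cs : CoxeterSystem M W) (k : ℕ) : Set W :=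
  {t | cs.IsReflection t ∧ cs.length t ≤ 2 * k + 1}

/-- The `k`-intermediate order `≤_{L^k}` on `W`. -/
def leLk (cs : CoxeterSystem M W) (k : ℕ) : W → W → Prop :=
  leL cs.length (TkSet cs k)

/-- The strict `k`-intermediate order `<_{L^k}` on `W`. -/
def ltLk (cs : CoxeterSystem M W) (k : ℕ) : W → W → Prop :=
  ltL cs.length (TkSet cs k)

/-- The Bruhat order on `W`. -/
def bruhatLE (cs : CoxeterSystem M W) : W → W → Prop :=
  leL cs.length (TSet cs)

/-- The strict Bruhat order on `W`. -/
def bruhatLT (cs : CoxeterSystem M W) : W → W → Prop :=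
  ltL cs.length (TSet cs)

end CoxeterSystem

section SymmetricGroup

/-- The number of inversions of a permutation of `Fin n`; this is the Coxeter
length of the permutation with respect to the standard Coxeter presentation
of the symmetric group. -/
def invCount {n : ℕ} (w : Equiv.Perm (Fin n)) : ℕ :=
  (Finset.univ.filter fun p : Fin n × Fin n => p.1 < p.2 ∧ w p.2 < w p.1).card

/-- The set of transpositions: the reflections of the symmetric group. -/
def swaps (n : ℕ) : Set (Equiv.Perm (Fin n)) := {σ | σ.IsSwap}

/-- The set of simple transpositions `s_i = (i, i+1)`: the standard Coxeter
generators of the symmetric group. -/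
def simples (n : ℕ) : Set (Equiv.Perm (Fin n)) :=
  {σ | ∃ i j : Fin n, (i : ℕ) + 1 = (j : ℕ) ∧ σ = Equiv.swap i j}

/-- The set `T_k` for the symmetric group: transpositions of length at most `2k + 1`. -/
def swapsK (n k : ℕ) : Set (Equiv.Perm (Fin n)) :=
  {σ | σ.IsSwap ∧ invCount σ ≤ 2 * k + 1}

end SymmetricGroup

end KBruhatPaper

open KBruhatPaper

theorem Equiv.Perm.apply_inv_self {α : Type*} (f : Equiv.Perm α) (x : α) : f (f⁻¹ x) = x :=
  Equiv.apply_symm_apply f x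

theorem Equiv.Perm.inv_apply_self {α : Type*} (f : Equiv.Perm α) (x : α) : f⁻¹ (f x) = x :=
  Equiv.symm_apply_apply f x

namespace Aux
open Equiv Finset KBruhatPaper

variable {n : ℕ}

lemma swap_val_mul (w : Equiv.Perm (Fin n)) (p q : Fin n) :
    Equiv.swap (w p) (w q) * w = w * Equiv.swap p q := by
  rw [Equiv.swap_apply_apply]; group

lemma mul_swap_left (w : Equiv.Perm (Fin n)) (p q : Fin n) :
    (w * Equiv.swap p q) p = w q := by
  simp [Equiv.Perm.mul_apply]

lemma mul_swap_right (w : Equiv.Perm (Fin n)) (p q : Fin n) :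
    (w * Equiv.swap p q) q = w p := by
  simp [Equiv.Perm.mul_apply]

lemma mul_swap_other (w : Equiv.Perm (Fin n)) {p q x : Fin n} (hx : x ≠ p) (hx' : x ≠ q) :
    (w * Equiv.swap p q) x = w x := by
  simp [Equiv.Perm.mul_apply, Equiv.swap_apply_of_ne_of_ne hx hx']

def ISet (w : Equiv.Perm (Fin n)) : Finset (Fin n × Fin n) :=
  Finset.univ.filter fun p => p.1 < p.2 ∧ w p.2 < w p.1

lemma invCount_eq (w : Equiv.Perm (Fin n)) : invCount w = (ISet w).card := rfl

lemma invCount_lt_swap (w : Equiv.Perm (Fin n)) {p q : Fin n} (hpq : p < q) (h : w p < w q) :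
    invCount w < invCount (w * Equiv.swap p q) := by
  classical
  set w' := w * Equiv.swap p q with hw'
  have hw'p : w' p = w q := mul_swap_left w p q
  have hw'q : w' q = w p := mul_swap_right w p q
  have hw'o : ∀ x : Fin n, x ≠ p → x ≠ q → w' x = w x := fun x h1 h2 => mul_swap_other w h1 h2
  have hpqmem : (p, q) ∈ ISet w' := by
    simp only [ISet, mem_filter, mem_univ, true_and]
    exact ⟨hpq, by rw [hw'p, hw'q]; exact h⟩
  set φ : Fin n × Fin n → Fin n × Fin n := fun r =>
    if r.2 = p ∧ w r.1 ≤ w q then (r.1, q)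
    else if r.1 = q ∧ w p ≤ w r.2 then (p, r.2) else r with hφ
  set ψ : Fin n × Fin n → Fin n × Fin n := fun r =>
    if r.2 = q ∧ w r.1 ≤ w q then (r.1, p)
    else if r.1 = p ∧ w p ≤ w r.2 then (q, r.2) else r with hψ
  have hmem : ∀ a b : Fin n, (a, b) ≠ (p, q) → a < b → w' b < w' a →
      (a, b) ∈ (ISet w').erase (p, q) := by
    intro a b h1 h2 h3
    rw [Finset.mem_erase]
    refine ⟨h1, ?_⟩
    simp only [ISet, mem_filter, mem_univ, true_and]
    exact ⟨h2, h3⟩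
  have hmaps : ∀ r ∈ ISet w, φ r ∈ (ISet w').erase (p, q) := by
    rintro ⟨x, y⟩ hr
    simp only [ISet, mem_filter, mem_univ, true_and] at hr
    obtain ⟨hxy, hinv⟩ := hr
    simp only [hφ]
    split_ifs with h1 h2
    · obtain ⟨hy, hle⟩ := h1
      subst hy
      refine hmem _ _ ?_ (lt_trans hxy hpq) ?_
      · intro hc
        exact absurd (congrArg Prod.fst hc) (ne_of_lt hxy)
      · rw [hw'q, hw'o x (ne_of_lt hxy) (ne_of_lt (lt_trans hxy hpq))]
        exact hinv
    · obtain ⟨hx, hle⟩ := h2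
      subst hx
      refine hmem _ _ ?_ (lt_trans hpq hxy) ?_
      · intro hc
        exact absurd (congrArg Prod.snd hc) (ne_of_gt hxy)
      · rw [hw'p, hw'o y (ne_of_gt (lt_trans hpq hxy)) (ne_of_gt hxy)]
        exact hinv
    · push_neg at h1 h2
      refine hmem _ _ ?_ hxy ?_
      · intro hc
        have hx : x = p := congrArg Prod.fst hc
        have hy : y = q := congrArg Prod.snd hc
        subst hx; subst hy
        exact absurd hinv (not_lt.2 h.le)
      · by_cases hxp : x = p
        · subst hxp
          have hyq : y ≠ q := by
            rintro rfl
            exact absurd hinv (not_lt.2 h.le)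
          rw [hw'p, hw'o y (ne_of_gt hxy) hyq]
          exact lt_trans hinv h
        · by_cases hxq : x = q
          · subst hxq
            rw [hw'q, hw'o y (ne_of_gt (lt_trans hpq hxy)) (ne_of_gt hxy)]
            exact h2 rfl
          · by_cases hyp : y = p
            · subst hyp
              rw [hw'p, hw'o x hxp hxq]
              exact h1 rfl
            · by_cases hyq : y = q
              · subst hyq
                rw [hw'q, hw'o x hxp hxq]
                exact lt_trans h hinv
              · rw [hw'o y hyp hyq, hw'o x hxp hxq]
                exact hinv
  have hretr : ∀ r ∈ ISet w, ψ (φ r) = r := by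
    rintro ⟨x, y⟩ hr
    simp only [ISet, mem_filter, mem_univ, true_and] at hr
    obtain ⟨hxy, hinv⟩ := hr
    simp only [hφ]
    split_ifs with h1 h2
    · obtain ⟨hy, hle⟩ := h1
      subst hy
      simp only [hψ]
      split_ifs with g1 g2
      · rfl
      · exact absurd ⟨trivial, hle⟩ g1
      · exact absurd ⟨trivial, hle⟩ g1
    · obtain ⟨hx, hle⟩ := h2
      subst hx
      simp only [hψ]
      split_ifs with g1 g2
      · exact absurd g1.1 (ne_of_gt hxy)
      · rfl
      · exact absurd ⟨trivial, hle⟩ g2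
    · push_neg at h1 h2
      simp only [hψ]
      split_ifs with g1 g2
      · obtain ⟨hy, hle⟩ := g1
        subst hy
        exact absurd hinv (not_lt.2 hle)
      · obtain ⟨hx, hle⟩ := g2
        subst hx
        exact absurd hinv (not_lt.2 hle)
      · rfl
  have hinj : Set.InjOn φ (ISet w) := by
    intro r hr r' hr' heq
    have := hretr r (by simpa using hr)
    have h2 := hretr r' (by simpa using hr')
    rw [← this, ← h2, heq]
  have hcard := Finset.card_le_card_of_injOn φ hmaps hinj
  rw [Finset.card_erase_of_mem hpqmem] at hcard
  have hpos : 0 < (ISet w').card := Finset.card_pos.2 ⟨_, hpqmem⟩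
  rw [invCount_eq, invCount_eq]
  omega

lemma apply_lt_of_invCount_lt (w : Equiv.Perm (Fin n)) {p q : Fin n} (hpq : p < q)
    (h : invCount w < invCount (w * Equiv.swap p q)) : w p < w q := by
  rcases lt_trichotomy (w p) (w q) with h' | h' | h'
  · exact h'
  · exact absurd (w.injective h') (ne_of_lt hpq)
  · exfalso
    have h1 : (w * Equiv.swap p q) p < (w * Equiv.swap p q) q := by
      rw [mul_swap_left, mul_swap_right]; exact h'
    have := invCount_lt_swap (w * Equiv.swap p q) hpq h1
    rw [mul_assoc, Equiv.swap_mul_self, mul_one] at this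
    omega

lemma swap_adj_order {p q : Fin n} (hpq : (p : ℕ) + 1 = q) {x y : Fin n} (hxy : x < y)
    (hne : ¬(x = p ∧ y = q)) : Equiv.swap p q x < Equiv.swap p q y := by
  have hplt : p < q := by rw [Fin.lt_def]; omega
  by_cases hxp : x = p
  · have hyq : y ≠ q := fun hc => hne ⟨hxp, hc⟩
    have hygt : q < y := by
      have hy' : (y : ℕ) ≠ (q : ℕ) := fun hc => hyq (Fin.ext hc)
      rw [Fin.lt_def] at hxy ⊢
      rw [hxp] at hxy
      omega
    rw [hxp, Equiv.swap_apply_left,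
      Equiv.swap_apply_of_ne_of_ne (ne_of_gt (lt_trans hplt hygt)) (ne_of_gt hygt)]
    exact hygt
  · by_cases hxq : x = q
    · have hyp : y ≠ p := ne_of_gt (lt_trans hplt (hxq ▸ hxy))
      have hyq : y ≠ q := ne_of_gt (hxq ▸ hxy)
      rw [hxq, Equiv.swap_apply_right, Equiv.swap_apply_of_ne_of_ne hyp hyq]
      exact lt_trans hplt (hxq ▸ hxy)
    · by_cases hyp : y = p
      · rw [hyp, Equiv.swap_apply_left, Equiv.swap_apply_of_ne_of_ne hxp hxq]
        exact lt_trans (hyp ▸ hxy) hplt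
      · by_cases hyq : y = q
        · rw [hyq, Equiv.swap_apply_right, Equiv.swap_apply_of_ne_of_ne hxp hxq]
          have hx' : (x : ℕ) ≠ (p : ℕ) := fun hc => hxp (Fin.ext hc)
          have hxy' : (x : ℕ) < (y : ℕ) := hxy
          rw [Fin.lt_def]
          rw [hyq] at hxy'
          omega
        · rw [Equiv.swap_apply_of_ne_of_ne hxp hxq, Equiv.swap_apply_of_ne_of_ne hyp hyq]
          exact hxy

lemma invCount_mul_adjswap (w : Equiv.Perm (Fin n)) {p q : Fin n} (hpq : (p : ℕ) + 1 = q)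
    (h : w p < w q) : invCount (w * Equiv.swap p q) = invCount w + 1 := by
  classical
  have hplt : p < q := by rw [Fin.lt_def]; omega
  set s := Equiv.swap p q with hs
  have hss : ∀ x : Fin n, s (s x) = x := fun x => Equiv.swap_apply_self p q x
  have hset : ISet (w * s) = insert (p, q) ((ISet w).image fun r => (s r.1, s r.2)) := by
    ext ⟨x, y⟩
    simp only [ISet, mem_filter, mem_univ, true_and, mem_insert, mem_image, Prod.mk.injEq,
      Prod.exists]
    simp only [Equiv.Perm.mul_apply]
    constructor
    · rintro ⟨hxy, hinv⟩
      by_cases hc : x = p ∧ y = q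
      · exact Or.inl ⟨hc.1, hc.2⟩
      · refine Or.inr ⟨s x, s y, ⟨?_, ?_⟩, ?_, ?_⟩
        · have : ¬(s x = p ∧ s y = q) := by
            rintro ⟨h1, h2⟩
            have : x = s p := by rw [← h1, hss]
            have hy : y = s q := by rw [← h2, hss]
            rw [Equiv.swap_apply_left] at this
            rw [Equiv.swap_apply_right] at hy
            subst this; subst hy
            rw [Fin.lt_def] at hxy; omega
          exact swap_adj_order hpq hxy hc
        · exact hinv
        · rw [hss]
        · rw [hss]
    · rintro (⟨rfl, rfl⟩ | ⟨a, b, ⟨hab, hinv⟩, h1, h2⟩)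
      · rw [Equiv.swap_apply_left, Equiv.swap_apply_right]
        exact ⟨hplt, h⟩
      · subst h1; subst h2
        have hne : ¬(a = p ∧ b = q) := by
          rintro ⟨rfl, rfl⟩
          exact absurd hinv (not_lt.2 h.le)
        refine ⟨swap_adj_order hpq hab hne, ?_⟩
        rw [hss, hss]
        exact hinv
  have hnotmem : (p, q) ∉ (ISet w).image fun r => (s r.1, s r.2) := by
    rw [mem_image]
    rintro ⟨⟨a, b⟩, hmem, heq⟩
    simp only [Prod.mk.injEq] at heq
    obtain ⟨h1, h2⟩ := heq
    have ha : a = q := by rw [← hss a, h1, Equiv.swap_apply_left]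
    have hb : b = p := by rw [← hss b, h2, Equiv.swap_apply_right]
    subst ha; subst hb
    simp only [ISet, mem_filter, mem_univ, true_and] at hmem
    exact absurd (lt_trans hmem.1 hplt) (lt_irrefl _)
  have hinj : Function.Injective fun r : Fin n × Fin n => (s r.1, s r.2) := by
    rintro ⟨a, b⟩ ⟨c, d⟩ heq
    simp only [Prod.mk.injEq] at heq ⊢
    exact ⟨s.injective heq.1, s.injective heq.2⟩
  rw [invCount_eq, invCount_eq, hset, Finset.card_insert_of_notMem hnotmem,
    Finset.card_image_of_injective _ hinj, Nat.add_comm]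

lemma invCount_one : invCount (1 : Equiv.Perm (Fin n)) = 0 := by
  rw [invCount_eq, Finset.card_eq_zero]
  ext ⟨x, y⟩
  simp only [ISet, mem_filter, mem_univ, true_and, Finset.notMem_empty, iff_false, not_and]
  simp only [Equiv.Perm.one_apply]
  intro h1
  exact not_lt.2 h1.le

lemma invCount_adjswap {p q : Fin n} (hpq : (p : ℕ) + 1 = q) :
    invCount (Equiv.swap p q) = 1 := by
  have hplt : p < q := by rw [Fin.lt_def]; omega
  have := invCount_mul_adjswap (1 : Equiv.Perm (Fin n)) hpq hplt
  rwa [one_mul, invCount_one] at this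
def cnt (w : Equiv.Perm (Fin n)) (i m : Fin n) : ℕ :=
  (Finset.univ.filter fun x => x ≤ i ∧ w x ≤ m).card

lemma cnt_eq_sum (w : Equiv.Perm (Fin n)) (i m : Fin n) :
    cnt w i m = ∑ x : Fin n, if x ≤ i ∧ w x ≤ m then 1 else 0 :=
  Finset.card_filter _ _

lemma sum_ind_const (p : Fin n) (C : Prop) [Decidable C] :
    (∑ x : Fin n, if x = p ∧ C then (1 : ℕ) else 0) = if C then 1 else 0 := by
  by_cases hC : C <;> simp [hC]

lemma cnt_trisect (w : Equiv.Perm (Fin n)) {p i : Fin n} (hpi : p ≤ i) (m : Fin n) :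
    cnt w i m = (∑ x : Fin n, if x < p ∧ w x ≤ m then 1 else 0)
      + (if w p ≤ m then 1 else 0)
      + ∑ x : Fin n, if p < x ∧ x ≤ i ∧ w x ≤ m then 1 else 0 := by
  rw [cnt_eq_sum, ← sum_ind_const p (w p ≤ m), ← Finset.sum_add_distrib,
    ← Finset.sum_add_distrib]
  apply Finset.sum_congr rfl
  intro x _
  rcases lt_trichotomy x p with h | h | h
  · have h1 : x ≤ i := le_trans h.le hpi
    have h2 : x ≠ p := ne_of_lt h
    have h3 : ¬ p < x := not_lt.2 h.le
    simp [h, h1, h2, h3]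
  · subst h
    simp [hpi, lt_irrefl]
  · have h2 : x ≠ p := ne_of_gt h
    have h3 : ¬ x < p := not_lt.2 h.le
    simp [h, h2, h3]

lemma sum_prefix_congr {u v : Equiv.Perm (Fin n)} {p : Fin n} (h : ∀ x, x < p → u x = v x)
    (m : Fin n) :
    (∑ x : Fin n, if x < p ∧ u x ≤ m then (1:ℕ) else 0)
      = ∑ x : Fin n, if x < p ∧ v x ≤ m then 1 else 0 := by
  apply Finset.sum_congr rfl
  intro x _
  by_cases hx : x < p
  · rw [h x hx]
  · simp [hx]

lemma cnt_swap_low (w : Equiv.Perm (Fin n)) {p q i : Fin n} (hpq : p < q) (hi : i < p)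
    (m : Fin n) : cnt (w * Equiv.swap p q) i m = cnt w i m := by
  rw [cnt_eq_sum, cnt_eq_sum]
  apply Finset.sum_congr rfl
  intro x _
  by_cases hx : x ≤ i
  · have hxp : x ≠ p := ne_of_lt (lt_of_le_of_lt hx hi)
    have hxq : x ≠ q := ne_of_lt (lt_trans (lt_of_le_of_lt hx hi) hpq)
    rw [mul_swap_other w hxp hxq]
  · simp [hx]

lemma cnt_swap_high (w : Equiv.Perm (Fin n)) {p q i : Fin n} (hpq : p < q) (hq : q ≤ i)
    (m : Fin n) : cnt (w * Equiv.swap p q) i m = cnt w i m := by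
  rw [cnt_eq_sum, cnt_eq_sum]
  calc ∑ x : Fin n, (if x ≤ i ∧ (w * Equiv.swap p q) x ≤ m then (1:ℕ) else 0)
      = ∑ x : Fin n, (if Equiv.swap p q x ≤ i ∧ w (Equiv.swap p q x) ≤ m then (1:ℕ) else 0) := by
        apply Finset.sum_congr rfl
        intro x _
        simp only [Equiv.Perm.mul_apply]
        congr 1
        by_cases hxp : x = p
        · subst hxp
          simp [Equiv.swap_apply_left, le_trans hpq.le hq, hq]
        · by_cases hxq : x = q
          · subst hxq
            simp [Equiv.swap_apply_right, le_trans hpq.le hq, hq]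
          · rw [Equiv.swap_apply_of_ne_of_ne hxp hxq]
    _ = ∑ x : Fin n, (if x ≤ i ∧ w x ≤ m then 1 else 0) :=
        Equiv.sum_comp (Equiv.swap p q) (fun y => if y ≤ i ∧ w y ≤ m then 1 else 0)

lemma cnt_swap_mid (w : Equiv.Perm (Fin n)) {p q i : Fin n} (hp : p ≤ i) (hq : i < q)
    (m : Fin n) :
    cnt (w * Equiv.swap p q) i m + (if w p ≤ m then 1 else 0)
      = cnt w i m + (if w q ≤ m then 1 else 0) := by
  rw [cnt_eq_sum, cnt_eq_sum, ← sum_ind_const p (w p ≤ m), ← sum_ind_const p (w q ≤ m),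
    ← Finset.sum_add_distrib, ← Finset.sum_add_distrib]
  apply Finset.sum_congr rfl
  intro x _
  by_cases hxp : x = p
  · rw [hxp, mul_swap_left]
    by_cases h1 : w q ≤ m <;> by_cases h2 : w p ≤ m <;> simp [h1, h2, hp]
  · by_cases hxq : x = q
    · have hxi : ¬ x ≤ i := by rw [hxq]; exact not_le.2 hq
      simp [hxi, hxp]
    · rw [mul_swap_other w hxp hxq]
      simp [hxp]

lemma cnt_top (w : Equiv.Perm (Fin n)) {i : Fin n} (hi : (i : ℕ) + 1 = n) (m : Fin n) :
    cnt w i m = (Finset.univ.filter fun y : Fin n => y ≤ m).card := by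
  rw [cnt_eq_sum, Finset.card_filter]
  calc ∑ x : Fin n, (if x ≤ i ∧ w x ≤ m then (1:ℕ) else 0)
      = ∑ x : Fin n, (if w x ≤ m then (1:ℕ) else 0) := by
        apply Finset.sum_congr rfl
        intro x _
        have : x ≤ i := by rw [Fin.le_def]; omega
        simp [this]
    _ = ∑ y : Fin n, (if y ≤ m then 1 else 0) := Equiv.sum_comp w (fun y => if y ≤ m then 1 else 0)

lemma cnt_val_zero (w : Equiv.Perm (Fin n)) (i : Fin n) {m : Fin n} (hm : (m : ℕ) = 0) :
    cnt w i m = if w⁻¹ m ≤ i then 1 else 0 := by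
  rw [cnt_eq_sum, ← sum_ind_const (w⁻¹ m) (w⁻¹ m ≤ i)]
  apply Finset.sum_congr rfl
  intro x _
  by_cases hx : x = w⁻¹ m
  · rw [hx]
    have h1 : w (w⁻¹ m) = m := Equiv.Perm.apply_inv_self w m
    simp [h1]
  · have hne : w x ≠ m := fun hc => hx (by rw [← hc, Equiv.Perm.inv_apply_self])
    have h2 : ¬ w x ≤ m := by
      intro hc
      apply hne
      apply Fin.ext
      have := (Fin.le_def).1 hc
      omega
    simp [hx, h2, -Equiv.Perm.coe_inv]

lemma cnt_val_succ (w : Equiv.Perm (Fin n)) (i : Fin n) {m' m : Fin n}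
    (hm : (m' : ℕ) + 1 = m) :
    cnt w i m = cnt w i m' + if w⁻¹ m ≤ i then 1 else 0 := by
  rw [cnt_eq_sum, cnt_eq_sum, ← sum_ind_const (w⁻¹ m) (w⁻¹ m ≤ i), ← Finset.sum_add_distrib]
  apply Finset.sum_congr rfl
  intro x _
  by_cases hx : x = w⁻¹ m
  · subst hx
    have h1 : w (w⁻¹ m) = m := Equiv.Perm.apply_inv_self w m
    have h2 : ¬ w (w⁻¹ m) ≤ m' := by rw [h1, Fin.le_def]; omega
    have h4 : m' < m := by rw [Fin.lt_def]; omega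
    simp [h1, h2, h4]
  · have hne : w x ≠ m := fun hc => hx (by rw [← hc, Equiv.Perm.inv_apply_self])
    have hne' : (w x : ℕ) ≠ (m : ℕ) := fun hc => hne (Fin.ext hc)
    have h3 : (w x ≤ m) ↔ (w x ≤ m') := by rw [Fin.le_def, Fin.le_def]; omega
    simp [hx, h3, -Equiv.Perm.coe_inv]

def Dom (u v : Equiv.Perm (Fin n)) : Prop := ∀ i m : Fin n, cnt v i m ≤ cnt u i m

lemma dom_of_swap_mul {u : Equiv.Perm (Fin n)} {a b : Fin n} (hab : a < b)
    (hlen : invCount u < invCount (Equiv.swap a b * u)) :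
    Dom u (Equiv.swap a b * u) := by
  set p := u⁻¹ a with hp
  set q := u⁻¹ b with hq
  have hup : u p = a := Equiv.Perm.apply_inv_self u a
  have huq : u q = b := Equiv.Perm.apply_inv_self u b
  have hkey : Equiv.swap a b * u = u * Equiv.swap p q := by
    rw [← hup, ← huq]; exact swap_val_mul u p q
  have hne : p ≠ q := by
    intro h
    rw [← hup, ← huq, h] at hab
    exact lt_irrefl _ hab
  have hplt : p < q := by
    rcases lt_or_gt_of_ne hne with h | h
    · exact h
    · exfalso
      have h1 : (u * Equiv.swap p q) q < (u * Equiv.swap p q) p := by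
        rw [mul_swap_left, mul_swap_right, hup, huq]; exact hab
      have := invCount_lt_swap (u * Equiv.swap p q) h h1
      rw [Equiv.swap_comm q p, mul_assoc, Equiv.swap_mul_self, mul_one] at this
      rw [hkey] at hlen
      omega
  intro i m
  rw [hkey]
  rcases lt_or_ge i p with hi | hi
  · rw [cnt_swap_low u hplt hi]
  · rcases le_or_gt q i with hi2 | hi2
    · rw [cnt_swap_high u hplt hi2]
    · have := cnt_swap_mid u hi hi2 m
      rw [hup, huq] at this
      have hle : (b ≤ m) → (a ≤ m) := fun hb => le_trans hab.le hb
      by_cases h1 : a ≤ m <;> by_cases h2 : b ≤ m <;> simp [h1, h2] at this <;> omega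

lemma dom_of_step {u v : Equiv.Perm (Fin n)} (h : KBruhatPaper.Step invCount (KBruhatPaper.swaps n) u v) :
    Dom u v := by
  obtain ⟨t, ht, rfl, hlen⟩ := h
  obtain ⟨a, b, hab, rfl⟩ := ht
  rcases lt_or_gt_of_ne hab with h' | h'
  · exact dom_of_swap_mul h' hlen
  · rw [Equiv.swap_comm] at hlen ⊢
    exact dom_of_swap_mul h' hlen

lemma dom_of_leL {u v : Equiv.Perm (Fin n)} (h : KBruhatPaper.leL invCount (KBruhatPaper.swaps n) u v) :
    Dom u v := by
  induction h with
  | refl => exact fun i m => le_refl _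
  | tail _ hstep ih => exact fun i m => le_trans (dom_of_step hstep i m) (ih i m)
lemma dom_descend {u v : Equiv.Perm (Fin n)} (hne : u ≠ v) (hdom : Dom u v) :
    ∃ v' : Equiv.Perm (Fin n), invCount v' < invCount v ∧ Dom u v' ∧
      KBruhatPaper.Step invCount (KBruhatPaper.swaps n) v' v := by
  classical
  have hs0ne : (Finset.univ.filter (fun x : Fin n => u x ≠ v x)).Nonempty := by
    rw [Finset.filter_nonempty_iff]
    by_contra hc
    push_neg at hc
    exact hne (Equiv.ext fun x => hc x (Finset.mem_univ x))
  set p := (Finset.univ.filter (fun x : Fin n => u x ≠ v x)).min' hs0ne with hpdef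
  have hpmem : u p ≠ v p := by
    have h := Finset.mem_filter.1 (Finset.min'_mem _ hs0ne)
    rw [← hpdef] at h
    exact h.2
  have hprefix : ∀ x, x < p → u x = v x := by
    intro x hx
    by_contra hc
    have hmem : x ∈ (Finset.univ.filter (fun x : Fin n => u x ≠ v x)) :=
      Finset.mem_filter.2 ⟨Finset.mem_univ x, hc⟩
    have := Finset.min'_le _ x hmem
    rw [← hpdef] at this
    exact absurd this (not_le.2 hx)
  have hsum_high_empty : ∀ w : Equiv.Perm (Fin n), ∀ m : Fin n,
      (∑ x : Fin n, if p < x ∧ x ≤ p ∧ w x ≤ m then (1:ℕ) else 0) = 0 := by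
    intro w m
    apply Finset.sum_eq_zero
    intro x _
    rw [if_neg]
    rintro ⟨h1, h2, -⟩
    exact absurd (lt_of_lt_of_le h1 h2) (lt_irrefl _)
  have hab : u p < v p := by
    rcases lt_or_gt_of_ne hpmem with h | h
    · exact h
    · exfalso
      have hd := hdom p (v p)
      rw [cnt_trisect u (le_refl p) (v p), cnt_trisect v (le_refl p) (v p),
        hsum_high_empty u (v p), hsum_high_empty v (v p),
        sum_prefix_congr hprefix (v p)] at hd
      rw [if_neg (not_le.2 h), if_pos (le_refl (v p))] at hd
      omega
  have hs1ne : (Finset.univ.filter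
      (fun x : Fin n => p < x ∧ u p ≤ v x ∧ v x < v p)).Nonempty := by
    have hva : v (v⁻¹ (u p)) = u p := Equiv.Perm.apply_inv_self v (u p)
    refine ⟨v⁻¹ (u p), Finset.mem_filter.2 ⟨Finset.mem_univ _, ?_, ?_, ?_⟩⟩
    · rcases lt_trichotomy (v⁻¹ (u p)) p with h | h | h
      · exfalso
        have h2 := hprefix _ h
        rw [hva] at h2
        exact absurd (u.injective h2) (ne_of_lt h)
      · exfalso
        apply hpmem
        rw [← hva, h]
      · exact h
    · rw [hva]
    · rw [hva]; exact hab
  set q := (Finset.univ.filter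
      (fun x : Fin n => p < x ∧ u p ≤ v x ∧ v x < v p)).min' hs1ne with hqdef
  have hqmem : p < q ∧ u p ≤ v q ∧ v q < v p := by
    have h := Finset.mem_filter.1 (Finset.min'_mem _ hs1ne)
    rw [← hqdef] at h
    exact h.2
  obtain ⟨hpq, hac, hcb⟩ := hqmem
  have hqmin : ∀ x, p < x → u p ≤ v x → v x < v p → q ≤ x := by
    intro x h1 h2 h3
    have hmem : x ∈ (Finset.univ.filter
        (fun x : Fin n => p < x ∧ u p ≤ v x ∧ v x < v p)) :=
      Finset.mem_filter.2 ⟨Finset.mem_univ x, h1, h2, h3⟩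
    have := Finset.min'_le _ x hmem
    rwa [← hqdef] at this
  have hv'p : (v * Equiv.swap p q) p = v q := mul_swap_left v p q
  have hv'q : (v * Equiv.swap p q) q = v p := mul_swap_right v p q
  have hvlt : invCount (v * Equiv.swap p q) < invCount v := by
    have h1 : (v * Equiv.swap p q) p < (v * Equiv.swap p q) q := by
      rw [hv'p, hv'q]; exact hcb
    have := invCount_lt_swap (v * Equiv.swap p q) hpq h1
    rwa [mul_assoc, Equiv.swap_mul_self, mul_one] at this
  have hstep : KBruhatPaper.Step invCount (KBruhatPaper.swaps n)
      (v * Equiv.swap p q) v := by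
    refine ⟨Equiv.swap (v q) (v p), ⟨v q, v p, ne_of_lt hcb, rfl⟩, ?_, hvlt⟩
    have h2 := swap_val_mul (v * Equiv.swap p q) p q
    rw [hv'p, hv'q] at h2
    rw [h2, mul_assoc, Equiv.swap_mul_self, mul_one]
  refine ⟨v * Equiv.swap p q, hvlt, ?_, hstep⟩
  intro i m
  rcases lt_or_ge i p with hi | hi
  · rw [cnt_swap_low v hpq hi]
    exact hdom i m
  · rcases le_or_gt q i with hi2 | hi2
    · rw [cnt_swap_high v hpq hi2]
      exact hdom i m
    · have hmid := cnt_swap_mid v hi hi2 m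
      by_cases hcm : v q ≤ m
      · by_cases hbm : v p ≤ m
        · rw [if_pos hbm, if_pos hcm] at hmid
          have heq : cnt (v * Equiv.swap p q) i m = cnt v i m := by omega
          rw [heq]; exact hdom i m
        · rw [if_neg hbm, if_pos hcm] at hmid
          have ham : u p ≤ m := le_trans hac hcm
          have hkey : cnt v i m + 1 ≤ cnt u i m := by
            rw [cnt_trisect u hi m, cnt_trisect v hi m, sum_prefix_congr hprefix m,
              if_pos ham, if_neg hbm]
            have hvlta : ∀ x : Fin n, p < x → x ≤ i → v x ≤ m → v x < u p := by
              intro x h1 h2 h3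
              by_contra hc
              push_neg at hc
              have h4 : v x < v p := lt_of_le_of_lt h3 (not_le.1 hbm)
              exact absurd (le_trans (hqmin x h1 hc h4) h2) (not_le.2 hi2)
            by_cases ha0 : (u p : ℕ) = 0
            · have hzero : (∑ x : Fin n, if p < x ∧ x ≤ i ∧ v x ≤ m then (1:ℕ) else 0) = 0 := by
                apply Finset.sum_eq_zero
                intro x _
                rw [if_neg]
                rintro ⟨h1, h2, h3⟩
                have h4 := hvlta x h1 h2 h3
                rw [Fin.lt_def] at h4
                omega
              rw [hzero]
              omega
            · have ha1 : 0 < (u p : ℕ) := Nat.pos_of_ne_zero ha0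
              have han : (u p : ℕ) - 1 < n := by omega
              set a' : Fin n := ⟨(u p : ℕ) - 1, han⟩ with ha'def
              have ha'a : (a' : ℕ) + 1 = (u p : ℕ) := by rw [ha'def]; simp only [Fin.val_mk]; omega
              have hv_eq : (∑ x : Fin n, if p < x ∧ x ≤ i ∧ v x ≤ m then (1:ℕ) else 0)
                  = ∑ x : Fin n, if p < x ∧ x ≤ i ∧ v x ≤ a' then (1:ℕ) else 0 := by
                apply Finset.sum_congr rfl
                intro x _
                by_cases h1 : p < x
                · by_cases h2 : x ≤ i
                  · by_cases h3 : v x ≤ m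
                    · have h4 := hvlta x h1 h2 h3
                      have h5 : v x ≤ a' := by
                        rw [Fin.le_def]
                        rw [Fin.lt_def] at h4
                        omega
                      simp [h1, h2, h3, h5]
                    · have h5 : ¬ v x ≤ a' := by
                        intro hc
                        apply h3
                        rw [Fin.le_def] at hc ⊢
                        have h6 : (u p : ℕ) ≤ (v q : ℕ) := hac
                        have h7 : (v q : ℕ) ≤ (m : ℕ) := hcm
                        omega
                      simp [h3, h5]
                  · simp [h2]
                · simp [h1]
              have hu_mono : (∑ x : Fin n, if p < x ∧ x ≤ i ∧ u x ≤ a' then (1:ℕ) else 0)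
                  ≤ ∑ x : Fin n, if p < x ∧ x ≤ i ∧ u x ≤ m then (1:ℕ) else 0 := by
                apply Finset.sum_le_sum
                intro x _
                by_cases h1 : p < x ∧ x ≤ i ∧ u x ≤ a'
                · have h6 : u x ≤ m := by
                    have h7 := h1.2.2
                    rw [Fin.le_def] at h7 ⊢
                    have h8 : (u p : ℕ) ≤ (v q : ℕ) := hac
                    have h9 : (v q : ℕ) ≤ (m : ℕ) := hcm
                    omega
                  rw [if_pos h1, if_pos ⟨h1.1, h1.2.1, h6⟩]
                · rw [if_neg h1]
                  omega
              have hda' := hdom i a'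
              rw [cnt_trisect u hi a', cnt_trisect v hi a', sum_prefix_congr hprefix a'] at hda'
              have hua' : ¬ u p ≤ a' := by
                rw [Fin.le_def]
                omega
              have hva' : ¬ v p ≤ a' := by
                rw [Fin.le_def]
                have h8 : (u p : ℕ) < (v p : ℕ) := hab
                omega
              rw [if_neg hua', if_neg hva'] at hda'
              rw [hv_eq]
              omega
          omega
      · have hbm : ¬ v p ≤ m := fun hc => hcm (le_trans hcb.le hc)
        rw [if_neg hbm, if_neg hcm] at hmid
        have heq : cnt (v * Equiv.swap p q) i m = cnt v i m := by omega
        rw [heq]; exact hdom i m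

lemma leL_of_dom_aux : ∀ N : ℕ, ∀ v u : Equiv.Perm (Fin n), invCount v ≤ N → Dom u v →
    KBruhatPaper.leL invCount (KBruhatPaper.swaps n) u v := by
  intro N
  induction N with
  | zero =>
    intro v u hN hdom
    by_cases huv : u = v
    · exact huv ▸ Relation.ReflTransGen.refl
    · obtain ⟨v', hlt, -, -⟩ := dom_descend huv hdom
      omega
  | succ N ih =>
    intro v u hN hdom
    by_cases huv : u = v
    · exact huv ▸ Relation.ReflTransGen.refl
    · obtain ⟨v', hlt, hdom', hstep⟩ := dom_descend huv hdom
      exact Relation.ReflTransGen.tail (ih v' u (by omega) hdom') hstep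

lemma leL_of_dom {u v : Equiv.Perm (Fin n)} (hdom : Dom u v) :
    KBruhatPaper.leL invCount (KBruhatPaper.swaps n) u v :=
  leL_of_dom_aux (invCount v) v u (le_refl _) hdom
def BInc (ib : Fin n) (w : Equiv.Perm (Fin n)) : Prop :=
  ∀ x y : Fin n, x < y → (y ≤ ib ∨ ib < x) → w x < w y

def BPres (ib : Fin n) (w : Equiv.Perm (Fin n)) : Prop := ∀ x, w x ≤ ib ↔ x ≤ ib

def bpresSubgroup (ib : Fin n) : Subgroup (Equiv.Perm (Fin n)) where
  carrier := {w | BPres ib w}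
  one_mem' := fun x => Iff.rfl
  mul_mem' := by
    intro a b ha hb x
    have h1 : (a * b) x = a (b x) := Equiv.Perm.mul_apply a b x
    rw [h1]
    exact (ha (b x)).trans (hb x)
  inv_mem' := by
    intro a ha x
    have h1 := ha (a⁻¹ x)
    rw [Equiv.Perm.apply_inv_self] at h1
    exact h1.symm

lemma swap_adj_ne {ib jb c d : Fin n} (hib : (ib : ℕ) + 1 = jb) (hcd : (c : ℕ) + 1 = d)
    (hne : (c : ℕ) ≠ (ib : ℕ)) : Equiv.swap c d ≠ Equiv.swap ib jb := by
  intro hc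
  have h1 : Equiv.swap c d ib = jb := by rw [hc, Equiv.swap_apply_left]
  by_cases h2 : ib = c
  · exact hne (by rw [h2])
  · by_cases h3 : ib = d
    · rw [h3, Equiv.swap_apply_right] at h1
      have : (c : ℕ) = (jb : ℕ) := by rw [h1]
      omega
    · rw [Equiv.swap_apply_of_ne_of_ne h2 h3] at h1
      have : (ib : ℕ) = (jb : ℕ) := by rw [h1]
      omega

lemma swap_adj_mem_simples {c d : Fin n} (hcd : (c : ℕ) + 1 = d) :
    Equiv.swap c d ∈ simples n := ⟨c, d, hcd, rfl⟩

lemma bpres_of_closure {ib jb : Fin n} (hib : (ib : ℕ) + 1 = jb) {w : Equiv.Perm (Fin n)}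
    (hw : w ∈ Subgroup.closure (simples n \ {Equiv.swap ib jb})) : BPres ib w := by
  have hle : Subgroup.closure (simples n \ {Equiv.swap ib jb}) ≤ bpresSubgroup ib := by
    apply (Subgroup.closure_le _).2
    rintro s ⟨⟨c, d, hcd, rfl⟩, hne⟩
    have hcib : (c : ℕ) ≠ (ib : ℕ) := by
      intro hcc
      apply hne
      have hdjb : d = jb := Fin.ext (by omega)
      have hcib2 : c = ib := Fin.ext hcc
      rw [hcib2, hdjb]
      rfl
    intro x
    by_cases hxc : x = c
    · rw [hxc, Equiv.swap_apply_left, Fin.le_def, Fin.le_def]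
      omega
    · by_cases hxd : x = d
      · rw [hxd, Equiv.swap_apply_right, Fin.le_def, Fin.le_def]
        omega
      · rw [Equiv.swap_apply_of_ne_of_ne hxc hxd]
  exact hle hw

lemma binc_of_adj {ib : Fin n} {w : Equiv.Perm (Fin n)}
    (h : ∀ c d : Fin n, (c : ℕ) + 1 = d → (d ≤ ib ∨ ib < c) → w c < w d) : BInc ib w := by
  have key : ∀ k : ℕ, ∀ x y : Fin n, (y : ℕ) = (x : ℕ) + k + 1 → (y ≤ ib ∨ ib < x) →
      w x < w y := by
    intro k
    induction k with
    | zero =>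
      intro x y hxy hblk
      exact h x y (by omega) hblk
    | succ k ih =>
      intro x y hxy hblk
      have hy1 : (y : ℕ) - 1 < n := by have := y.isLt; omega
      set y' : Fin n := ⟨(y : ℕ) - 1, hy1⟩ with hy'def
      have hvy' : (y' : ℕ) = (y : ℕ) - 1 := rfl
      have h1 : w x < w y' := by
        apply ih x y' (by omega)
        rcases hblk with hb | hb
        · left
          rw [Fin.le_def] at hb ⊢
          omega
        · right; exact hb
      have h2 : w y' < w y := by
        apply h y' y (by omega)
        rcases hblk with hb | hb
        · left; exact hb
        · right
          rw [Fin.lt_def] at hb ⊢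
          omega
      exact lt_trans h1 h2
  intro x y hxy hblk
  have hxy' : (x : ℕ) < (y : ℕ) := hxy
  exact key ((y : ℕ) - (x : ℕ) - 1) x y (by omega) hblk

lemma cnt_mul_bpres {ib : Fin n} {w z : Equiv.Perm (Fin n)} (hz : BPres ib z) (m : Fin n) :
    cnt (w * z) ib m = cnt w ib m := by
  rw [cnt_eq_sum, cnt_eq_sum]
  calc ∑ x : Fin n, (if x ≤ ib ∧ (w * z) x ≤ m then (1:ℕ) else 0)
      = ∑ x : Fin n, (if z x ≤ ib ∧ w (z x) ≤ m then (1:ℕ) else 0) := by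
        apply Finset.sum_congr rfl
        intro x _
        simp only [Equiv.Perm.mul_apply]
        exact if_congr (by rw [hz x]) rfl rfl
    _ = ∑ x : Fin n, (if x ≤ ib ∧ w x ≤ m then 1 else 0) :=
        Equiv.sum_comp z (fun y => if y ≤ ib ∧ w y ≤ m then 1 else 0)

lemma le_apply_of_mono {f : Fin n → Fin n} (hinj : Function.Injective f)
    (hmono : ∀ x y : Fin n, x < y → f x < f y) (t : Fin n) : (t : ℕ) ≤ (f t : ℕ) := by
  have himg : (Finset.Iic t).image f ⊆ Finset.Iic (f t) := by
    intro y hy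
    rw [Finset.mem_image] at hy
    obtain ⟨x, hx, rfl⟩ := hy
    rw [Finset.mem_Iic] at hx ⊢
    rcases eq_or_lt_of_le hx with rfl | hlt
    · exact le_refl _
    · exact (hmono x t hlt).le
  have hcard := Finset.card_le_card himg
  rw [Finset.card_image_of_injective _ hinj, Fin.card_Iic, Fin.card_Iic] at hcard
  omega

lemma eq_one_of_no_descent {w : Equiv.Perm (Fin n)}
    (h : ∀ c d : Fin n, (c : ℕ) + 1 = d → w c < w d) : w = 1 := by
  have hmono : ∀ x y : Fin n, x < y → w x < w y := by
    have key : ∀ k : ℕ, ∀ x y : Fin n, (y : ℕ) = (x : ℕ) + k + 1 → w x < w y := by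
      intro k
      induction k with
      | zero => intro x y hxy; exact h x y (by omega)
      | succ k ih =>
        intro x y hxy
        have hy1 : (y : ℕ) - 1 < n := by have := y.isLt; omega
        set y' : Fin n := ⟨(y : ℕ) - 1, hy1⟩ with hy'def
        have hvy' : (y' : ℕ) = (y : ℕ) - 1 := rfl
        exact lt_trans (ih x y' (by omega)) (h y' y (by omega))
    intro x y hxy
    have hxy' : (x : ℕ) < (y : ℕ) := hxy
    exact key ((y : ℕ) - (x : ℕ) - 1) x y (by omega)
  have hmono' : ∀ x y : Fin n, x < y → w⁻¹ x < w⁻¹ y := by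
    intro x y hxy
    rcases lt_trichotomy (w⁻¹ x) (w⁻¹ y) with h' | h' | h'
    · exact h'
    · exfalso
      have : x = y := by
        have := congrArg w h'
        rwa [Equiv.Perm.apply_inv_self, Equiv.Perm.apply_inv_self] at this
      exact absurd this (ne_of_lt hxy)
    · exfalso
      have h2 := hmono _ _ h'
      rw [Equiv.Perm.apply_inv_self, Equiv.Perm.apply_inv_self] at h2
      exact absurd (lt_trans hxy h2) (lt_irrefl _)
  apply Equiv.ext
  intro t
  have h1 := le_apply_of_mono w.injective hmono t
  have h2 := le_apply_of_mono w⁻¹.injective hmono' (w t)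
  rw [Equiv.Perm.inv_apply_self] at h2
  simp only [Equiv.Perm.one_apply]
  exact Fin.ext (by omega)

lemma exists_descent {w : Equiv.Perm (Fin n)} (hw : w ≠ 1) :
    ∃ c d : Fin n, (c : ℕ) + 1 = d ∧ w d < w c := by
  by_contra hc
  push_neg at hc
  apply hw
  apply eq_one_of_no_descent
  intro c d hcd
  rcases lt_trichotomy (w c) (w d) with h | h | h
  · exact h
  · exfalso
    have : c = d := w.injective h
    rw [this] at hcd
    omega
  · exact absurd h (not_lt.2 (hc c d hcd))

lemma binc_unique {ib : Fin n} {x y : Equiv.Perm (Fin n)}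
    (hx : BInc ib x) (hy : BInc ib y)
    (hsets : ∀ a : Fin n, x⁻¹ a ≤ ib ↔ y⁻¹ a ≤ ib) : x = y := by
  set z := x⁻¹ * y with hz
  have hyz : y = x * z := by rw [hz]; group
  have hzp : BPres ib z := by
    intro t
    have h1 : z t = x⁻¹ (y t) := Equiv.Perm.mul_apply x⁻¹ y t
    rw [h1]
    refine (hsets (y t)).trans ?_
    rw [Equiv.Perm.inv_apply_self]
  by_cases hz1 : z = 1
  · rw [hyz, hz1, mul_one]
  · exfalso
    obtain ⟨c, d, hcd, hdesc⟩ := exists_descent hz1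
    have hblk : d ≤ ib ∨ ib < c := by
      by_contra hcon
      push_neg at hcon
      obtain ⟨h1, h2⟩ := hcon
      have hc1 : z c ≤ ib := (hzp c).2 h2
      have hd1 : ¬ z d ≤ ib := fun hc2 => absurd ((hzp d).1 hc2) (not_le.2 h1)
      apply absurd hdesc
      apply not_lt.2
      rw [Fin.le_def]
      rw [Fin.le_def] at hc1
      rw [Fin.le_def, not_le] at hd1
      omega
    have hblk2 : (z c ≤ ib ∧ z d ≤ ib) ∨ (ib < z c ∧ ib < z d) := by
      rcases hblk with hb | hb
      · left
        refine ⟨(hzp c).2 ?_, (hzp d).2 hb⟩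
        rw [Fin.le_def] at hb ⊢
        omega
      · right
        constructor
        · rw [Fin.lt_def, ← not_le]
          intro hc2
          have := (hzp c).1 (by rw [Fin.le_def]; omega)
          rw [Fin.le_def] at this
          rw [Fin.lt_def] at hb
          omega
        · rw [Fin.lt_def, ← not_le]
          intro hc2
          have := (hzp d).1 (by rw [Fin.le_def]; omega)
          rw [Fin.le_def] at this
          rw [Fin.lt_def] at hb
          omega
    have hyd : y d < y c := by
      rw [hyz]
      simp only [Equiv.Perm.mul_apply]
      apply hx (z d) (z c) hdesc
      rcases hblk2 with ⟨h1, h2⟩ | ⟨h1, h2⟩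
      · exact Or.inl h1
      · exact Or.inr h2
    have hyc := hy c d (by rw [Fin.lt_def]; omega) hblk
    exact absurd hyc (not_lt.2 hyd.le)
lemma adj_block {ib c d : Fin n} (hcd : (c : ℕ) + 1 = d) (hcib : (c : ℕ) ≠ (ib : ℕ)) :
    d ≤ ib ∨ ib < c := by
  rw [Fin.le_def, Fin.lt_def]
  omega

lemma mem_J_of_adj {ib jb c d : Fin n} (hib : (ib : ℕ) + 1 = jb) (hcd : (c : ℕ) + 1 = d)
    (hcib : (c : ℕ) ≠ (ib : ℕ)) :
    Equiv.swap c d ∈ simples n \ {Equiv.swap ib jb} :=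
  ⟨swap_adj_mem_simples hcd,
    fun hmem2 => swap_adj_ne hib hcd hcib (Set.mem_singleton_iff.1 hmem2)⟩

lemma cib_of_mem_J {ib jb c d : Fin n} (hib : (ib : ℕ) + 1 = jb) (hcd : (c : ℕ) + 1 = d)
    (hne : Equiv.swap c d ∉ ({Equiv.swap ib jb} : Set (Equiv.Perm (Fin n)))) :
    (c : ℕ) ≠ (ib : ℕ) := by
  intro hcc
  apply hne
  have hdjb : d = jb := Fin.ext (by omega)
  have hcib2 : c = ib := Fin.ext hcc
  rw [hcib2, hdjb]
  rfl

lemma binc_of_pfactor {ib jb : Fin n} (hib : (ib : ℕ) + 1 = jb)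
    {u uup uJ : Equiv.Perm (Fin n)}
    (hPF : KBruhatPaper.PFactor invCount (simples n \ {Equiv.swap ib jb}) u uup uJ) :
    BInc ib uup := by
  obtain ⟨hcl, hinc, hfact, hlen⟩ := hPF
  apply binc_of_adj
  intro c d hcd hblk
  have hcib : (c : ℕ) ≠ (ib : ℕ) := by
    rcases hblk with hb | hb
    · rw [Fin.le_def] at hb; omega
    · rw [Fin.lt_def] at hb; omega
  have hlt : c < d := by rw [Fin.lt_def]; omega
  exact apply_lt_of_invCount_lt uup hlt (hinc _ (mem_J_of_adj hib hcd hcib))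

lemma cnt_eq_of_pfactor {ib jb : Fin n} (hib : (ib : ℕ) + 1 = jb)
    {u uup uJ : Equiv.Perm (Fin n)}
    (hPF : KBruhatPaper.PFactor invCount (simples n \ {Equiv.swap ib jb}) u uup uJ)
    (m : Fin n) : cnt u ib m = cnt uup ib m := by
  obtain ⟨hcl, -, hfact, -⟩ := hPF
  rw [hfact]
  exact cnt_mul_bpres (bpres_of_closure hib hcl) m

lemma exists_pfactor_aux {ib jb : Fin n} (hib : (ib : ℕ) + 1 = jb) :
    ∀ N : ℕ, ∀ u : Equiv.Perm (Fin n), invCount u ≤ N →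
    ∃ uup uJ : Equiv.Perm (Fin n),
      KBruhatPaper.PFactor invCount (simples n \ {Equiv.swap ib jb}) u uup uJ := by
  intro N
  induction N with
  | zero =>
    intro u hN
    by_cases hall : ∀ c d : Fin n, (c : ℕ) + 1 = d → (c : ℕ) ≠ (ib : ℕ) → u c < u d
    · refine ⟨u, 1, Subgroup.one_mem _, ?_, (mul_one u).symm, by rw [invCount_one]; omega⟩
      rintro s ⟨⟨c, d, hcd, rfl⟩, hne⟩
      have hcib := cib_of_mem_J hib hcd hne
      rw [invCount_mul_adjswap u hcd (hall c d hcd hcib)]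
      omega
    · exfalso
      push_neg at hall
      obtain ⟨c, d, hcd, hcib, hdesc⟩ := hall
      have hdesc' : u d < u c := by
        rcases lt_trichotomy (u d) (u c) with h | h | h
        · exact h
        · exfalso; have : d = c := u.injective h; rw [this] at hcd; omega
        · exact absurd h (not_lt.2 hdesc)
      have h1 : (u * Equiv.swap c d) c < (u * Equiv.swap c d) d := by
        rw [mul_swap_left, mul_swap_right]; exact hdesc'
      have h2 := invCount_mul_adjswap (u * Equiv.swap c d) hcd h1
      rw [mul_assoc, Equiv.swap_mul_self, mul_one] at h2
      omega
  | succ N ih =>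
    intro u hN
    by_cases hall : ∀ c d : Fin n, (c : ℕ) + 1 = d → (c : ℕ) ≠ (ib : ℕ) → u c < u d
    · refine ⟨u, 1, Subgroup.one_mem _, ?_, (mul_one u).symm, by rw [invCount_one]; omega⟩
      rintro s ⟨⟨c, d, hcd, rfl⟩, hne⟩
      have hcib := cib_of_mem_J hib hcd hne
      rw [invCount_mul_adjswap u hcd (hall c d hcd hcib)]
      omega
    · push_neg at hall
      obtain ⟨c, d, hcd, hcib, hdesc⟩ := hall
      have hdesc' : u d < u c := by
        rcases lt_trichotomy (u d) (u c) with h | h | h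
        · exact h
        · exfalso; have : d = c := u.injective h; rw [this] at hcd; omega
        · exact absurd h (not_lt.2 hdesc)
      have h1 : (u * Equiv.swap c d) c < (u * Equiv.swap c d) d := by
        rw [mul_swap_left, mul_swap_right]; exact hdesc'
      have h2 := invCount_mul_adjswap (u * Equiv.swap c d) hcd h1
      rw [mul_assoc, Equiv.swap_mul_self, mul_one] at h2
      obtain ⟨uup, uJ', hPF'⟩ := ih (u * Equiv.swap c d) (by omega)
      obtain ⟨hcl', hinc', hfact', hlen'⟩ := hPF'
      have hbinc : BInc ib uup := binc_of_pfactor hib ⟨hcl', hinc', hfact', hlen'⟩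
      have hbp : BPres ib uJ' := bpres_of_closure hib hcl'
      have hblk := adj_block hcd hcib
      have hasc : uJ' c < uJ' d := by
        rcases lt_trichotomy (uJ' c) (uJ' d) with h | h | h
        · exact h
        · exfalso; have : c = d := uJ'.injective h; rw [this] at hcd; omega
        · exfalso
          have hblk2 : uJ' c ≤ ib ∨ ib < uJ' d := by
            rcases hblk with hb | hb
            · refine Or.inl ((hbp c).2 ?_)
              rw [Fin.le_def] at hb ⊢
              omega
            · refine Or.inr ?_
              rw [Fin.lt_def, ← not_le]
              intro hc2
              have h3 := (hbp d).1 (by rw [Fin.le_def]; omega)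
              rw [Fin.le_def] at h3
              rw [Fin.lt_def] at hb
              omega
          have h4 := hbinc (uJ' d) (uJ' c) h hblk2
          have h5 : (u * Equiv.swap c d) d < (u * Equiv.swap c d) c := by
            rw [hfact']
            simp only [Equiv.Perm.mul_apply]
            exact h4
          rw [mul_swap_left, mul_swap_right] at h5
          exact absurd (lt_trans h5 hdesc') (lt_irrefl _)
      have hlenJ : invCount (uJ' * Equiv.swap c d) = invCount uJ' + 1 :=
        invCount_mul_adjswap uJ' hcd hasc
      refine ⟨uup, uJ' * Equiv.swap c d, ?_, hinc', ?_, ?_⟩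
      · exact Subgroup.mul_mem _ hcl'
          (Subgroup.subset_closure (mem_J_of_adj hib hcd hcib))
      · have : u = (u * Equiv.swap c d) * Equiv.swap c d := by
          rw [mul_assoc, Equiv.swap_mul_self, mul_one]
        rw [this, hfact', mul_assoc]
      · rw [hlenJ]
        omega

lemma exists_pfactor {ib jb : Fin n} (hib : (ib : ℕ) + 1 = jb) (u : Equiv.Perm (Fin n)) :
    ∃ uup uJ : Equiv.Perm (Fin n),
      KBruhatPaper.PFactor invCount (simples n \ {Equiv.swap ib jb}) u uup uJ :=
  exists_pfactor_aux hib (invCount u) u (le_refl _)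
lemma inv_le_iff_of_cnt_eq {ib : Fin n} {x y : Equiv.Perm (Fin n)}
    (h : ∀ m, cnt x ib m = cnt y ib m) : ∀ a : Fin n, x⁻¹ a ≤ ib ↔ y⁻¹ a ≤ ib := by
  intro a
  rcases Nat.eq_zero_or_pos (a : ℕ) with h0 | h0
  · have hx := cnt_val_zero x ib h0
    have hy := cnt_val_zero y ib h0
    have h1 := h a
    rw [hx, hy] at h1
    by_cases hb1 : x⁻¹ a ≤ ib <;> by_cases hb2 : y⁻¹ a ≤ ib <;>
      simp [hb1, hb2, -Equiv.Perm.coe_inv] at h1 ⊢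
  · have han : (a : ℕ) - 1 < n := by have := a.isLt; omega
    set a' : Fin n := ⟨(a : ℕ) - 1, han⟩ with ha'def
    have hsucc : (a' : ℕ) + 1 = (a : ℕ) := by simp only [ha'def, Fin.val_mk]; omega
    have hx := cnt_val_succ x ib hsucc
    have hy := cnt_val_succ y ib hsucc
    have h1 := h a
    have h2 := h a'
    rw [hx, hy] at h1
    by_cases hb1 : x⁻¹ a ≤ ib <;> by_cases hb2 : y⁻¹ a ≤ ib <;>
      simp [hb1, hb2, -Equiv.Perm.coe_inv] at h1 ⊢ <;> omega

lemma cnt_full (w : Equiv.Perm (Fin n)) (ib : Fin n) {m : Fin n} (hm : (m : ℕ) + 1 = n) :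
    cnt w ib m = (ib : ℕ) + 1 := by
  have hrfl : cnt w ib m = (Finset.univ.filter fun x : Fin n => x ≤ ib ∧ w x ≤ m).card := rfl
  have hfil : (Finset.univ.filter fun x : Fin n => x ≤ ib ∧ w x ≤ m) = Finset.Iic ib := by
    ext z
    simp only [Finset.mem_filter, Finset.mem_univ, true_and, Finset.mem_Iic,
      and_iff_left_iff_imp]
    intro _
    rw [Fin.le_def]
    have := (w z).isLt
    omega
  rw [hrfl, hfil, Fin.card_Iic]

lemma find_boundary {ib : Fin n} {x y : Equiv.Perm (Fin n)}
    (hdom : ∀ m, cnt y ib m ≤ cnt x ib m) :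
    ∀ g : ℕ, ∀ a : Fin n, x⁻¹ a ≤ ib → cnt y ib a < cnt x ib a → n ≤ (a : ℕ) + g →
    ∃ a' b' : Fin n, (a' : ℕ) + 1 = (b' : ℕ) ∧ x⁻¹ a' ≤ ib ∧ ¬ x⁻¹ b' ≤ ib ∧
      cnt y ib a' < cnt x ib a' := by
  intro g
  induction g with
  | zero =>
    intro a _ _ hg
    exact absurd hg (by have := a.isLt; omega)
  | succ g ih =>
    intro a hmem hstrict hg
    have haval : (a : ℕ) < n := a.isLt
    by_cases hlast : (a : ℕ) + 1 = n
    · exfalso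
      rw [cnt_full x ib hlast, cnt_full y ib hlast] at hstrict
      omega
    · have hbn : (a : ℕ) + 1 < n := by omega
      set b : Fin n := ⟨(a : ℕ) + 1, hbn⟩ with hbdef
      have hab : (a : ℕ) + 1 = (b : ℕ) := rfl
      by_cases hbx : x⁻¹ b ≤ ib
      · have hstrict' : cnt y ib b < cnt x ib b := by
          rw [cnt_val_succ x ib hab, cnt_val_succ y ib hab, if_pos hbx]
          by_cases hby : y⁻¹ b ≤ ib
          · rw [if_pos hby]; omega
          · rw [if_neg hby]; omega
        exact ih b hbx hstrict' (by simp only [hbdef, Fin.val_mk]; omega)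
      · exact ⟨a, b, hab, hmem, hbx, hstrict⟩

lemma binc_swap_step {ib : Fin n} {x : Equiv.Perm (Fin n)} (hx : BInc ib x)
    {a' b' : Fin n} (hab : (a' : ℕ) + 1 = b') (hP1 : x⁻¹ a' ≤ ib) (hP2 : ¬ x⁻¹ b' ≤ ib) :
    BInc ib (x * Equiv.swap (x⁻¹ a') (x⁻¹ b')) := by
  have hxa : x (x⁻¹ a') = a' := Equiv.Perm.apply_inv_self x a'
  have hxb : x (x⁻¹ b') = b' := Equiv.Perm.apply_inv_self x b'
  have hP2' : ib < x⁻¹ b' := not_le.1 hP2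
  have hPne : x⁻¹ a' < x⁻¹ b' := lt_of_le_of_lt hP1 hP2'
  intro t t' htt hblk
  by_cases ht1 : t = x⁻¹ a'
  · have hblk' : t' ≤ ib := by
      rcases hblk with hb | hb
      · exact hb
      · exact absurd (lt_of_lt_of_le hb (ht1 ▸ hP1)) (lt_irrefl _)
    have ht'1 : t' ≠ x⁻¹ a' := ne_of_gt (ht1 ▸ htt)
    have ht'2 : t' ≠ x⁻¹ b' := fun hc => hP2 (hc ▸ hblk')
    rw [ht1, mul_swap_left, mul_swap_other x ht'1 ht'2, hxb]
    have h1 : a' < x t' := by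
      have := hx (x⁻¹ a') t' (ht1 ▸ htt) (Or.inl hblk')
      rwa [hxa] at this
    have h2 : x t' ≠ b' := fun hc => ht'2 (by rw [← hc, Equiv.Perm.inv_apply_self])
    have h2' : (x t' : ℕ) ≠ (b' : ℕ) := fun hc => h2 (Fin.ext hc)
    rw [Fin.lt_def] at h1 ⊢
    omega
  · by_cases ht2 : t = x⁻¹ b'
    · have ht'1 : t' ≠ x⁻¹ a' := ne_of_gt (lt_trans hPne (ht2 ▸ htt))
      have ht'2 : t' ≠ x⁻¹ b' := ne_of_gt (ht2 ▸ htt)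
      rw [ht2, mul_swap_right, mul_swap_other x ht'1 ht'2, hxa]
      have h1 : b' < x t' := by
        have := hx (x⁻¹ b') t' (ht2 ▸ htt) (Or.inr hP2')
        rwa [hxb] at this
      rw [Fin.lt_def] at h1 ⊢
      omega
    · by_cases ht3 : t' = x⁻¹ a'
      · have ht4 : t ≠ x⁻¹ b' := ht2
        rw [ht3, mul_swap_left, mul_swap_other x ht1 ht4, hxb]
        have h1 : x t < a' := by
          have := hx t (x⁻¹ a') (ht3 ▸ htt) (Or.inl hP1)
          rwa [hxa] at this
        rw [Fin.lt_def] at h1 ⊢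
        omega
      · by_cases ht4 : t' = x⁻¹ b'
        · have hibt : ib < t := by
            rcases hblk with hb | hb
            · exact absurd (lt_of_lt_of_le (ht4 ▸ hP2' : ib < t') hb) (lt_irrefl _)
            · exact hb
          rw [ht4, mul_swap_right, mul_swap_other x ht1 ht2, hxa]
          have h1 : x t < b' := by
            have := hx t (x⁻¹ b') (ht4 ▸ htt) (Or.inr hibt)
            rwa [hxb] at this
          have h2 : x t ≠ a' := fun hc => ht1 (by rw [← hc, Equiv.Perm.inv_apply_self])
          have h2' : (x t : ℕ) ≠ (a' : ℕ) := fun hc => h2 (Fin.ext hc)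
          rw [Fin.lt_def] at h1 ⊢
          omega
        · rw [mul_swap_other x ht1 ht2, mul_swap_other x ht3 ht4]
          exact hx t t' htt hblk

lemma chain_aux (k : ℕ) {ib : Fin n} {y : Equiv.Perm (Fin n)} (hy : BInc ib y) :
    ∀ g : ℕ, ∀ x : Equiv.Perm (Fin n), BInc ib x →
      (∀ m, cnt y ib m ≤ cnt x ib m) →
      (∑ m : Fin n, (cnt x ib m - cnt y ib m)) ≤ g →
      KBruhatPaper.leL invCount (swapsK n k) x y := by
  intro g
  induction g with
  | zero =>
    intro x hx hdom hsum
    by_cases heq : ∀ m, cnt x ib m = cnt y ib m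
    · rw [binc_unique hx hy (inv_le_iff_of_cnt_eq heq)]
      exact Relation.ReflTransGen.refl
    · exfalso
      push_neg at heq
      obtain ⟨m0, hm0⟩ := heq
      have hstrict : cnt y ib m0 < cnt x ib m0 := lt_of_le_of_ne (hdom m0) (fun hc => hm0 hc.symm)
      have h1 : 1 ≤ cnt x ib m0 - cnt y ib m0 := by omega
      have h2 := Finset.single_le_sum (f := fun m => cnt x ib m - cnt y ib m)
        (fun i _ => Nat.zero_le _) (Finset.mem_univ m0)
      have h3 : cnt x ib m0 - cnt y ib m0 ≤ ∑ m : Fin n, (cnt x ib m - cnt y ib m) := h2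
      omega
  | succ g ih =>
    intro x hx hdom hsum
    by_cases heq : ∀ m, cnt x ib m = cnt y ib m
    · rw [binc_unique hx hy (inv_le_iff_of_cnt_eq heq)]
      exact Relation.ReflTransGen.refl
    · push_neg at heq
      obtain ⟨m0, hm0⟩ := heq
      have hm0' : cnt y ib m0 < cnt x ib m0 := lt_of_le_of_ne (hdom m0) (fun hc => hm0 hc.symm)
      -- least strict value
      have hsne : (Finset.univ.filter (fun m : Fin n => cnt y ib m < cnt x ib m)).Nonempty :=
        ⟨m0, Finset.mem_filter.2 ⟨Finset.mem_univ _, hm0'⟩⟩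
      set a0 := (Finset.univ.filter (fun m : Fin n => cnt y ib m < cnt x ib m)).min' hsne
        with ha0def
      have ha0mem : cnt y ib a0 < cnt x ib a0 := by
        have h := Finset.mem_filter.1 (Finset.min'_mem _ hsne)
        rw [← ha0def] at h
        exact h.2
      have ha0min : ∀ m' : Fin n, cnt y ib m' < cnt x ib m' → a0 ≤ m' := by
        intro m' hm'
        have := Finset.min'_le
          (Finset.univ.filter (fun m : Fin n => cnt y ib m < cnt x ib m)) m'
          (Finset.mem_filter.2 ⟨Finset.mem_univ _, hm'⟩)
        rwa [← ha0def] at this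
      have ha0x : x⁻¹ a0 ≤ ib := by
        rcases Nat.eq_zero_or_pos (a0 : ℕ) with h0 | h0
        · have hxz := cnt_val_zero x ib h0
          have hyz := cnt_val_zero y ib h0
          rw [hxz, hyz] at ha0mem
          by_cases hbx : x⁻¹ a0 ≤ ib
          · exact hbx
          · rw [if_neg hbx] at ha0mem; omega
        · have han : (a0 : ℕ) - 1 < n := by have := a0.isLt; omega
          set a0' : Fin n := ⟨(a0 : ℕ) - 1, han⟩ with ha0'def
          have hsucc : (a0' : ℕ) + 1 = (a0 : ℕ) := by simp only [ha0'def, Fin.val_mk]; omega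
          have hprev : cnt x ib a0' = cnt y ib a0' := by
            by_contra hne
            have hst : cnt y ib a0' < cnt x ib a0' :=
              lt_of_le_of_ne (hdom a0') (fun hc => hne hc.symm)
            have h2 := ha0min a0' hst
            rw [Fin.le_def] at h2
            simp only [ha0'def, Fin.val_mk] at h2
            omega
          rw [cnt_val_succ x ib hsucc, cnt_val_succ y ib hsucc] at ha0mem
          by_cases hbx : x⁻¹ a0 ≤ ib
          · exact hbx
          · rw [if_neg hbx] at ha0mem; omega
      obtain ⟨a', b', hab, hP1, hP2, hstrict⟩ :=
        find_boundary hdom n a0 ha0x ha0mem (by omega)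
      have hxa : x (x⁻¹ a') = a' := Equiv.Perm.apply_inv_self x a'
      have hxb : x (x⁻¹ b') = b' := Equiv.Perm.apply_inv_self x b'
      have hP2' : ib < x⁻¹ b' := not_le.1 hP2
      have hPne : x⁻¹ a' < x⁻¹ b' := lt_of_le_of_lt hP1 hP2'
      have ha'b' : a' < b' := by rw [Fin.lt_def]; omega
      set x' := x * Equiv.swap (x⁻¹ a') (x⁻¹ b') with hx'def
      have hinc : invCount x < invCount x' := by
        apply invCount_lt_swap x hPne
        rw [hxa, hxb]
        exact ha'b'
      have hstep : KBruhatPaper.Step invCount (swapsK n k) x x' := by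
        refine ⟨Equiv.swap a' b', ⟨⟨a', b', ne_of_lt ha'b', rfl⟩, ?_⟩, ?_, hinc⟩
        · rw [invCount_adjswap hab]; omega
        · rw [hx'def, ← swap_val_mul x (x⁻¹ a') (x⁻¹ b'), hxa, hxb]
      have hcnt' : ∀ m : Fin n, cnt x' ib m + (if a' ≤ m then 1 else 0)
          = cnt x ib m + (if b' ≤ m then 1 else 0) := by
        intro m
        have := cnt_swap_mid x hP1 hP2' m
        rwa [hxa, hxb, ← hx'def] at this
      have hdom' : ∀ m, cnt y ib m ≤ cnt x' ib m := by
        intro m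
        have hm := hcnt' m
        by_cases ham : a' ≤ m
        · by_cases hbm : b' ≤ m
          · rw [if_pos ham, if_pos hbm] at hm
            have : cnt x' ib m = cnt x ib m := by omega
            rw [this]; exact hdom m
          · rw [if_pos ham, if_neg hbm] at hm
            have hma : m = a' := by
              apply Fin.ext
              rw [Fin.le_def] at ham
              rw [Fin.le_def, not_le] at hbm
              omega
            rw [hma] at hm ⊢
            omega
        · have hbm : ¬ b' ≤ m := by
            intro hc
            apply ham
            rw [Fin.le_def] at hc ⊢
            omega
          rw [if_neg ham, if_neg hbm] at hm
          have : cnt x' ib m = cnt x ib m := by omega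
          rw [this]; exact hdom m
      have hsum' : (∑ m : Fin n, (cnt x' ib m - cnt y ib m)) ≤ g := by
        have hlt : (∑ m : Fin n, (cnt x' ib m - cnt y ib m))
            < ∑ m : Fin n, (cnt x ib m - cnt y ib m) := by
          apply Finset.sum_lt_sum
          · intro m _
            have hm := hcnt' m
            by_cases ham : a' ≤ m <;> by_cases hbm : b' ≤ m <;>
              simp [ham, hbm] at hm <;> omega
          · refine ⟨a', Finset.mem_univ _, ?_⟩
            have hm := hcnt' a'
            rw [if_pos (le_refl a')] at hm
            have hbm : ¬ b' ≤ a' := by rw [Fin.le_def]; omega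
            rw [if_neg hbm] at hm
            omega
        omega
      have hbx' : BInc ib x' := binc_swap_step hx hab hP1 hP2
      exact Relation.ReflTransGen.head hstep (ih x' hbx' hdom' hsum')
end Aux

/-- in the symmetric group `S_n`, `u ≤ v` in the Bruhat order iff
`P^{S∖{s}}(u) ≤_{L^k} P^{S∖{s}}(v)` for every simple reflection `s`; consequently
`w ↦ (P^{S∖{s_1}}(w), …, P^{S∖{s_{n-1}}}(w))` identifies `(S_n, ≤)` with the image
of `φ_k` in the product of the posets `(S_n^{S∖{s_i}}, ≤_{L^k})`. -/
theorem stmt_10 (n : ℕ) (hn : 2 ≤ n) (k : ℕ) (u v : Equiv.Perm (Fin n)) :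
    leL invCount (swaps n) u v ↔
      ∀ s ∈ simples n, ∀ uup uJ vup vJ : Equiv.Perm (Fin n),
        PFactor invCount (simples n \ {s}) u uup uJ →
        PFactor invCount (simples n \ {s}) v vup vJ →
        leL invCount (swapsK n k) uup vup := by
  constructor
  · intro h s hs uup uJ vup vJ hu hv
    obtain ⟨ib, jb, hib, rfl⟩ := hs
    have hbu : Aux.BInc ib uup := Aux.binc_of_pfactor hib hu
    have hbv : Aux.BInc ib vup := Aux.binc_of_pfactor hib hv
    have hdom := Aux.dom_of_leL h
    have hdom2 : ∀ m, Aux.cnt vup ib m ≤ Aux.cnt uup ib m := by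
      intro m
      rw [← Aux.cnt_eq_of_pfactor hib hu m, ← Aux.cnt_eq_of_pfactor hib hv m]
      exact hdom ib m
    exact Aux.chain_aux k hbv (∑ m : Fin n, (Aux.cnt uup ib m - Aux.cnt vup ib m))
      uup hbu hdom2 (le_refl _)
  · intro H
    apply Aux.leL_of_dom
    intro i m
    by_cases hi : (i : ℕ) + 1 = n
    · rw [Aux.cnt_top u hi m, Aux.cnt_top v hi m]
    · have hjn : (i : ℕ) + 1 < n := by have := i.isLt; omega
      set j : Fin n := ⟨(i : ℕ) + 1, hjn⟩ with hjdef
      have hij : (i : ℕ) + 1 = (j : ℕ) := rfl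
      have hs : Equiv.swap i j ∈ simples n := ⟨i, j, hij, rfl⟩
      obtain ⟨uup, uJ, hu⟩ := Aux.exists_pfactor hij u
      obtain ⟨vup, vJ, hv⟩ := Aux.exists_pfactor hij v
      have hle := H _ hs uup uJ vup vJ hu hv
      have hle2 : leL invCount (swaps n) uup vup :=
        Relation.ReflTransGen.mono (r := Step invCount (swapsK n k)) (fun a b hab => by
          obtain ⟨t, ⟨ht1, ht2⟩, h3, h4⟩ := hab
          exact ⟨t, ht1, h3, h4⟩) _ _ hle
      have hd := Aux.dom_of_leL hle2 i m
      rw [Aux.cnt_eq_of_pfactor hij hu m, Aux.cnt_eq_of_pfactor hij hv m]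
      exact hd
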